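/- Let 𝔄 be a Bose–Mesner algebra and let x₀, x ∈ X be such that A(x₀,x) = A(x₀,x₀) for every A ∈ 𝔄. Then x = x₀. Consequently, R_𝔄⁻¹(i₀) = Δ_X, where i₀ ∈ I_𝔄 denotes the evaluation character at any diagonal point (x₀,x₀). -/
import Mathlib


open MeasureTheory Topology Filter

noncomputable section

variable {X : Type*} {I : Type*}

/-- The matrix product `(A ∘ B)(x,z) = ∫ A(x,y) B(y,z) dμ(y)`. -/
def matProd [MeasurableSpace X] (μ : Measure X) (A B : X × X → ℂ) :
    X × X → ℂ :=
  fun p => ∫ y, A (p.1, y) * B (y, p.2) ∂μ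

universe w

/-- `S` admits an approximate identity (a net) for the matrix product. -/
def HasApproxIdIn [TopologicalSpace X] [MeasurableSpace X] (μ : Measure X)
    (S : Set C(X × X, ℂ)) : Prop :=
  ∃ (ι : Type w) (l : Filter ι), l.NeBot ∧ ∃ E : ι → C(X × X, ℂ),
    (∀ n, E n ∈ S) ∧ ∀ A : C(X × X, ℂ),
      TendstoUniformly (fun n => matProd μ ⇑(E n) ⇑A) ⇑A l ∧
      TendstoUniformly (fun n => matProd μ ⇑A ⇑(E n)) ⇑A l

/-- A Bose--Mesner algebra: a unital C*-subalgebra of `(C(X × X, ℂ), •, conj, ‖·‖∞)`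
(i.e. a closed star-subalgebra for the pointwise (Hadamard) operations) satisfying
(BMA1a), (BMA1b), (BMA2), (BMA3). -/
structure IsBMA [TopologicalSpace X] [MeasurableSpace X] (μ : Measure X)
    (S : Set C(X × X, ℂ)) : Prop where
  isSubalg : ∃ 𝔄 : StarSubalgebra ℂ C(X × X, ℂ), (𝔄 : Set C(X × X, ℂ)) = S
  isClosed : IsClosed S
  approxId : HasApproxIdIn.{w} μ S
  constJ : ∀ A ∈ S, ∃ c : ℂ, ∀ p : X × X, matProd μ ⇑A (fun _ => (1 : ℂ)) p = c
  mulClosed : ∀ A ∈ S, ∀ B ∈ S, ∃ C ∈ S, ∀ p : X × X, matProd μ ⇑A ⇑B p = C p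
  transpClosed : ∀ A ∈ S, ∃ B ∈ S, ∀ p : X × X, B p = A p.swap

/-- Commutativity of a Bose--Mesner algebra (for the matrix product). -/
def BMAComm [TopologicalSpace X] [MeasurableSpace X] (μ : Measure X)
    (S : Set C(X × X, ℂ)) : Prop :=
  ∀ A ∈ S, ∀ B ∈ S, matProd μ ⇑A ⇑B = matProd μ ⇑B ⇑A

/-- Symmetry of a Bose--Mesner algebra: `A⊤ = A` for all `A ∈ S`. -/
def BMASymm [TopologicalSpace X] (S : Set C(X × X, ℂ)) : Prop :=
  ∀ A ∈ S, ∀ p : X × X, A p.swap = A p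

/-- The character space `I_𝔄` of a unital subalgebra of `C(X × X, ℂ)` with the
Hadamard (pointwise) product: all unital `•`-algebra homomorphisms `𝔄 → ℂ`,
with the weak-* (pointwise convergence) topology. -/
def CharSp [TopologicalSpace X] (𝔄 : StarSubalgebra ℂ C(X × X, ℂ)) : Type _ :=
  {φ : 𝔄 → ℂ // φ 1 = 1 ∧ (∀ A B, φ (A * B) = φ A * φ B) ∧
    (∀ A B, φ (A + B) = φ A + φ B) ∧ ∀ (c : ℂ) (A : 𝔄), φ (c • A) = c * φ A}

instance [TopologicalSpace X] (𝔄 : StarSubalgebra ℂ C(X × X, ℂ)) :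
    TopologicalSpace (CharSp 𝔄) := by
  unfold CharSp; infer_instance

/-- The map `R_𝔄 : X × X → I_𝔄`, sending `(x, y)` to the evaluation character. -/
def evalChar [TopologicalSpace X] (𝔄 : StarSubalgebra ℂ C(X × X, ℂ)) (p : X × X) :
    CharSp 𝔄 :=
  ⟨fun A => (A : C(X × X, ℂ)) p, rfl, fun _ _ => rfl, fun _ _ => rfl,
    fun _ _ => rfl⟩

section AuxBMA

variable [TopologicalSpace X] [CompactSpace X] [T2Space X] [Nonempty X]
    [MeasurableSpace X] [BorelSpace X]

/-- Continuous functions are integrable on a compact space with a finite measure. -/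
lemma myIntegrable (μ : Measure X) [IsFiniteMeasure μ] (f : X → ℂ) (hf : Continuous f) :
    Integrable f μ :=
  hf.integrable_of_hasCompactSupport (HasCompactSupport.of_compactSpace f)

/-- Every element of a Bose--Mesner algebra has constant diagonal. -/
lemma diag_const (μ : Measure X) [IsFiniteMeasure μ]
    (𝔄 : StarSubalgebra ℂ C(X × X, ℂ)) (hBMA : IsBMA μ (𝔄 : Set C(X × X, ℂ)))
    (A : C(X × X, ℂ)) (hA : A ∈ 𝔄) (z w : X) : A (z, z) = A (w, w) := by
  obtain ⟨ι, l, hl, E, hE, hEapp⟩ := hBMA.approxId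
  haveI := hl
  obtain ⟨B, hB, hBv⟩ := hBMA.transpClosed A hA
  have hC : ∀ n, (E n) * B ∈ (𝔄 : Set C(X × X, ℂ)) := fun n => mul_mem (hE n) hB
  choose c hc using fun n => hBMA.constJ _ (hC n)
  have key : ∀ u : X, Tendsto c l (nhds (A (u, u))) := by
    intro u
    have h1 := (hEapp A).1.tendsto_at (u, u)
    have h2 : ∀ n, matProd μ ⇑(E n) ⇑A (u, u) = c n := by
      intro n
      rw [← hc n (u, u)]
      unfold matProd
      congr 1
      funext y
      simp only [ContinuousMap.mul_apply, mul_one]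
      rw [hBv (u, y)]
      rfl
    rw [show c = fun n => matProd μ ⇑(E n) ⇑A (u, u) from funext fun n => (h2 n).symm]
    exact h1
  exact tendsto_nhds_unique (key z) (key w)

/-- Columns at `x` and `x₀` agree for every element of the algebra. -/
lemma col_eq (μ : Measure X) [IsFiniteMeasure μ] [μ.IsOpenPosMeasure]
    (𝔄 : StarSubalgebra ℂ C(X × X, ℂ)) (hBMA : IsBMA μ (𝔄 : Set C(X × X, ℂ)))
    (x₀ x : X)
    (h : ∀ A : 𝔄, (A : C(X × X, ℂ)) (x₀, x) = (A : C(X × X, ℂ)) (x₀, x₀)) :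
    ∀ A : C(X × X, ℂ), A ∈ 𝔄 → ∀ y : X, A (y, x) = A (y, x₀) := by
  have h' : ∀ C : C(X × X, ℂ), C ∈ 𝔄 → C (x₀, x) = C (x₀, x₀) :=
    fun C hC => h ⟨C, hC⟩
  have h'' : ∀ C : C(X × X, ℂ), C ∈ 𝔄 → C (x, x₀) = C (x₀, x₀) := by
    intro C hC
    obtain ⟨B, hB, hBv⟩ := hBMA.transpClosed C hC
    have hb := h' B hB
    rw [hBv (x₀, x), hBv (x₀, x₀)] at hb
    simpa using hb
  intro A hA
  obtain ⟨B, hB, hBv⟩ := hBMA.transpClosed (star A) (star_mem hA)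
  obtain ⟨C, hC, hCv⟩ := hBMA.mulClosed B hB A hA
  have contA : ∀ z : X, Continuous (fun y => A (y, z)) := fun z =>
    A.continuous.comp (continuous_id.prodMk continuous_const)
  have hCval : ∀ z u : X, (∫ y, star (A (y, z)) * A (y, u) ∂μ) = C (z, u) := by
    intro z u
    rw [← hCv (z, u)]
    unfold matProd
    congr 1
    funext y
    rw [hBv (z, y)]
    simp
  have hint : ∀ z u : X, Integrable (fun y => star (A (y, z)) * A (y, u)) μ := by
    intro z u
    exact myIntegrable μ _ ((continuous_star.comp (contA z)).mul (contA u))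
  set f : X → ℂ := fun y => A (y, x) - A (y, x₀) with hf
  have hfc : Continuous f := (contA x).sub (contA x₀)
  have expand : (fun y => star (f y) * f y) =
      fun y => (star (A (y, x)) * A (y, x) - star (A (y, x)) * A (y, x₀)) -
        (star (A (y, x₀)) * A (y, x) - star (A (y, x₀)) * A (y, x₀)) := by
    funext y
    simp only [hf, star_sub]
    ring
  have i1 : Integrable (fun y => star (A (y, x)) * A (y, x) -
      star (A (y, x)) * A (y, x₀)) μ := (hint x x).sub (hint x x₀)
  have i2 : Integrable (fun y => star (A (y, x₀)) * A (y, x) -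
      star (A (y, x₀)) * A (y, x₀)) μ := (hint x₀ x).sub (hint x₀ x₀)
  have key : (∫ y, star (f y) * f y ∂μ) = 0 := by
    rw [expand]
    rw [integral_sub i1 i2,
      integral_sub (hint x x) (hint x x₀), integral_sub (hint x₀ x) (hint x₀ x₀),
      hCval x x, hCval x x₀, hCval x₀ x, hCval x₀ x₀]
    rw [diag_const μ 𝔄 hBMA C hC x x₀, h'' C hC, h' C hC]
    ring
  have hgint : Integrable (fun y => star (f y) * f y) μ :=
    myIntegrable μ _ ((continuous_star.comp hfc).mul hfc)
  have key2 : (∫ y, (Complex.normSq (f y) : ℝ) ∂μ) = 0 := by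
    have h3 := integral_re (𝕜 := ℂ) hgint
    rw [key, map_zero] at h3
    rw [← h3]
    congr 1
    funext y
    have hsq : star (f y) * f y = ((Complex.normSq (f y) : ℝ) : ℂ) := by
      rw [Complex.normSq_eq_conj_mul_self]; rfl
    rw [hsq]
    simp [RCLike.re_to_complex]
  have hnsc : Continuous (fun y => (Complex.normSq (f y) : ℝ)) :=
    Complex.continuous_normSq.comp hfc
  have hnsint : Integrable (fun y => (Complex.normSq (f y) : ℝ)) μ :=
    hnsc.integrable_of_hasCompactSupport (HasCompactSupport.of_compactSpace _)
  have hae : (fun y => (Complex.normSq (f y) : ℝ)) =ᵐ[μ] 0 :=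
    (integral_eq_zero_iff_of_nonneg (fun y => Complex.normSq_nonneg _) hnsint).mp key2
  have heq : (fun y => (Complex.normSq (f y) : ℝ)) = 0 :=
    (Continuous.ae_eq_iff_eq μ hnsc continuous_const).mp hae
  intro y
  have : Complex.normSq (f y) = 0 := congrFun heq y
  have hfy : f y = 0 := Complex.normSq_eq_zero.mp this
  have := sub_eq_zero.mp hfy
  exact this

/-- The main separation result. -/
lemma pt_eq (μ : Measure X) [IsFiniteMeasure μ] [μ.IsOpenPosMeasure]
    (𝔄 : StarSubalgebra ℂ C(X × X, ℂ)) (hBMA : IsBMA μ (𝔄 : Set C(X × X, ℂ)))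
    (x₀ x : X)
    (h : ∀ A : 𝔄, (A : C(X × X, ℂ)) (x₀, x) = (A : C(X × X, ℂ)) (x₀, x₀)) :
    x = x₀ := by
  by_contra hne
  obtain ⟨ι, l, hl, E, hE, hEapp⟩ := hBMA.approxId
  haveI := hl
  obtain ⟨f, hf0, hf1, -⟩ := exists_continuous_zero_one_of_isClosed
    (isClosed_singleton (x := x)) (isClosed_singleton (x := x₀))
    (by simpa [Set.disjoint_singleton] using hne)
  let G : C(X × X, ℂ) := ⟨fun p => (f p.2 : ℂ),
    Complex.continuous_ofReal.comp (f.continuous.comp continuous_snd)⟩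
  have h1 : Tendsto (fun n => matProd μ ⇑G ⇑(E n) (x₀, x)) l (nhds (G (x₀, x))) :=
    ((hEapp G).2).tendsto_at (x₀, x)
  have h2 : Tendsto (fun n => matProd μ ⇑G ⇑(E n) (x₀, x₀)) l (nhds (G (x₀, x₀))) :=
    ((hEapp G).2).tendsto_at (x₀, x₀)
  have hsame : (fun n => matProd μ ⇑G ⇑(E n) (x₀, x)) =
      fun n => matProd μ ⇑G ⇑(E n) (x₀, x₀) := by
    funext n
    unfold matProd
    congr 1
    funext y
    rw [col_eq μ 𝔄 hBMA x₀ x h (E n) (hE n) y]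
  rw [hsame] at h1
  have : G (x₀, x) = G (x₀, x₀) := tendsto_nhds_unique h1 h2
  have hx : f x = (0 : ℝ) := hf0 rfl
  have hx₀ : f x₀ = (1 : ℝ) := hf1 rfl
  simp only [G, ContinuousMap.coe_mk, hx, hx₀] at this
  exact (by norm_num : ((0 : ℝ) : ℂ) ≠ ((1 : ℝ) : ℂ)) this

end AuxBMA
theorem stmt8 [TopologicalSpace X] [CompactSpace X] [T2Space X] [Nonempty X]
    [MeasurableSpace X] [BorelSpace X]
    (μ : Measure X) [IsFiniteMeasure μ] [μ.Regular] [μ.IsOpenPosMeasure]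
    (𝔄 : StarSubalgebra ℂ C(X × X, ℂ))
    (hBMA : IsBMA μ (𝔄 : Set C(X × X, ℂ))) :
    (∀ x₀ x : X,
      (∀ A : 𝔄, (A : C(X × X, ℂ)) (x₀, x) = (A : C(X × X, ℂ)) (x₀, x₀)) →
        x = x₀) ∧
    ∀ x₀ : X, evalChar 𝔄 ⁻¹' {evalChar 𝔄 (x₀, x₀)} = {p : X × X | p.1 = p.2} := by
  have part1 : ∀ x₀ x : X,
      (∀ A : 𝔄, (A : C(X × X, ℂ)) (x₀, x) = (A : C(X × X, ℂ)) (x₀, x₀)) →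
        x = x₀ := fun x₀ x h => pt_eq μ 𝔄 hBMA x₀ x h
  refine ⟨part1, fun x₀ => ?_⟩
  ext p
  simp only [Set.mem_preimage, Set.mem_singleton_iff, Set.mem_setOf_eq]
  constructor
  · intro hp
    have hall : ∀ A : 𝔄, (A : C(X × X, ℂ)) p = (A : C(X × X, ℂ)) (x₀, x₀) :=
      fun A => congrArg (fun φ : CharSp 𝔄 => φ.1 A) hp
    have hkey : ∀ A : 𝔄, (A : C(X × X, ℂ)) (p.1, p.2) = (A : C(X × X, ℂ)) (p.1, p.1) := by
      intro A
      have h1 := hall A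
      have h2 : (A : C(X × X, ℂ)) (x₀, x₀) = (A : C(X × X, ℂ)) (p.1, p.1) :=
        diag_const μ 𝔄 hBMA (A : C(X × X, ℂ)) A.2 x₀ p.1
      rw [show ((p.1, p.2) : X × X) = p from rfl, h1, h2]
    exact (part1 p.1 p.2 hkey).symm
  · intro hp
    apply Subtype.ext
    funext A
    show (A : C(X × X, ℂ)) p = (A : C(X × X, ℂ)) (x₀, x₀)
    have hpe : p = (p.1, p.1) := by
      conv_lhs => rw [show p = (p.1, p.2) from rfl]
      rw [hp]
    rw [hpe]
    exact diag_const μ 𝔄 hBMA (A : C(X × X, ℂ)) A.2 p.1 x₀
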